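/- Let L, L̃, R, R̃ be real numbers with 0 ≤ L ≤ L̃, 0 ≤ R ≤ R̃, L̃ > 0 and R̃ > 0, and set β = 1 / (1 + √(2 R̃ / L̃)) (so β ∈ (0,1)). Then (−L · ln β + R) / (1 − β) ≤ L + √(2 · L̃ · R̃) + R. -/

import Mathlib

/-- Freund–Schapire parameter-tuning inequality: for `0 ≤ L ≤ L̃`,
`0 ≤ R ≤ R̃`, `L̃ > 0`, `R̃ > 0` and `β = 1/(1 + √(2R̃/L̃))`,
`(-L ln β + R)/(1-β) ≤ L + √(2 L̃ R̃) + R`. -/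
theorem freund_schapire_tuning
    (L Ltil R Rtil : ℝ)
    (hL0 : 0 ≤ L) (hL : L ≤ Ltil) (hR0 : 0 ≤ R) (hR : R ≤ Rtil)
    (hLtil : 0 < Ltil) (hRtil : 0 < Rtil)
    (β : ℝ) (hβ : β = 1 / (1 + Real.sqrt (2 * Rtil / Ltil))) :
    (-L * Real.log β + R) / (1 - β) ≤ L + Real.sqrt (2 * Ltil * Rtil) + R := by
  set s := Real.sqrt (2 * Rtil / Ltil) with hs_def
  have hpos : (0:ℝ) < 2 * Rtil / Ltil := by positivity
  have hs0 : 0 < s := Real.sqrt_pos.mpr hpos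
  have hs2 : s ^ 2 = 2 * Rtil / Ltil := Real.sq_sqrt hpos.le
  have hs2' : Ltil * s ^ 2 = 2 * Rtil := by rw [hs2]; field_simp
  have h1s : (0:ℝ) < 1 + s := by linarith
  -- value of sqrt(2·Ltil·Rtil)
  have ht : Real.sqrt (2 * Ltil * Rtil) = Ltil * s := by
    have hsq : (Ltil * s) ^ 2 = 2 * Ltil * Rtil := by
      rw [mul_pow, hs2]; field_simp
    rw [← hsq, Real.sqrt_sq (by positivity)]
  -- log bound : log(1+s) ≤ ((1+s) - (1+s)⁻¹)/2
  have hlog : Real.log (1 + s) ≤ ((1 + s) - (1 + s)⁻¹) / 2 := by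
    have hx : 0 < Real.log (1 + s) := Real.log_pos (by linarith)
    have h := (Real.self_lt_sinh_iff (x := Real.log (1 + s))).mpr hx
    have hsinh : Real.sinh (Real.log (1 + s)) = ((1 + s) - (1 + s)⁻¹) / 2 := by
      rw [Real.sinh_eq, Real.exp_log h1s, Real.exp_neg, Real.exp_log h1s]
    linarith [h, hsinh ▸ h]
  have hβ1 : 1 - β = s / (1 + s) := by rw [hβ]; field_simp; ring
  have hβpos : 0 < 1 - β := by rw [hβ1]; positivity
  have hlogβ : Real.log β = -Real.log (1 + s) := by
    rw [hβ, one_div, Real.log_inv]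
  rw [div_le_iff₀ hβpos, hlogβ, ht, hβ1]
  have hnum : -L * -Real.log (1 + s) + R ≤ L * (((1 + s) - (1 + s)⁻¹) / 2) + R := by
    have : L * Real.log (1 + s) ≤ L * (((1 + s) - (1 + s)⁻¹) / 2) :=
      mul_le_mul_of_nonneg_left hlog hL0
    linarith
  refine hnum.trans ?_
  rw [← mul_le_mul_iff_of_pos_right h1s]
  have hdiv : s / (1 + s) * (1 + s) = s := div_mul_cancel₀ s h1s.ne'
  have hLHS : (L * ((1 + s - (1 + s)⁻¹) / 2) + R) * (1 + s)
      = L * (s ^ 2 + 2 * s) / 2 + R * (1 + s) := by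
    field_simp
    ring
  rw [hLHS, mul_assoc, hdiv]
  nlinarith [hs2', mul_nonneg (sub_nonneg.mpr hL) (sq_nonneg s), hR, hRtil, hs0, hL0]
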